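/- For the Holling type II prey-predator nonlinearities: (i) there is a unique u* ∈ (0,1) with μΠ(u*) = a; (ii) for every (u,v) ∈ O, the derivative of Φ along the vector field satisfies (u(1−u) − Π(u)v, v(μΠ(u) − a)) · ∇Φ(u,v) = (μ/m)(Π(u) − Π(u*))((1−u)(b+u) − m v*); (iii) if moreover b ≥ m v*, then (u(1−u) − Π(u)v, v(μΠ(u) − a)) · ∇Φ(u,v) ≤ 0 for all (u,v) ∈ O. (Example in Section 7, Holling II system.) -/

import Mathlib

open Filter Set MeasureTheory

noncomputable section

/-- The open region `O = {(u,v) : 0 < u < 1, v > 0}`. -/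
def Oset : Set (ℝ × ℝ) := {p : ℝ × ℝ | 0 < p.1 ∧ p.1 < 1 ∧ 0 < p.2}

/-- The Holling type II functional response `Π(u) = mu/(b+u)`. -/
noncomputable def PiH (m b : ℝ) (u : ℝ) : ℝ := m * u / (b + u)

/-- The Lyapunov function for the Holling type II prey-predator system, where
`u*` satisfies `μΠ(u*) = a` and `v* = (1 − u*)(b + u*)/m`. -/
noncomputable def PhiH (m b μ us : ℝ) : ℝ × ℝ → ℝ := fun p =>
  μ * (∫ ξ in us..p.1, (PiH m b ξ - PiH m b us) / PiH m b ξ) +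
    ∫ η in ((1 - us) * (b + us) / m)..p.2, (η - (1 - us) * (b + us) / m) / η

/-- Derivative of a parameterized integral of a function continuous on `Ioi 0`. -/
lemma hasDerivAt_integral_of_contOn {f : ℝ → ℝ} (hf : ContinuousOn f (Set.Ioi 0))
    {c x : ℝ} (hc : 0 < c) (hx : 0 < x) :
    HasDerivAt (fun u => ∫ ξ in c..u, f ξ) (f x) x := by
  have hmem : Set.uIcc c x ⊆ Set.Ioi 0 :=
    fun y hy => lt_of_lt_of_le (lt_min hc hx) hy.1
  exact intervalIntegral.integral_hasDerivAt_right
    (hf.mono hmem).intervalIntegrable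
    (hf.stronglyMeasurableAtFilter isOpen_Ioi x hx)
    (hf.continuousAt (isOpen_Ioi.mem_nhds hx))

/-- The Holling II example of Section 7: uniqueness of `u*`, the value of the
derivative of `Φ` along the vector field, and its nonpositivity when `b ≥ m v*`. -/
theorem holling_II_lyapunov
    (a b m μ : ℝ) (ha : 0 < a) (hb : 0 < b) (hm : 0 < m) (hμ : 0 < μ)
    (hab : a < μ * m / (b + 1)) :
    (∃! u : ℝ, u ∈ Set.Ioo (0 : ℝ) 1 ∧ μ * PiH m b u = a) ∧
    (∀ us : ℝ, us ∈ Set.Ioo (0 : ℝ) 1 → μ * PiH m b us = a →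
      (∀ p ∈ Oset,
        (p.1 * (1 - p.1) - PiH m b p.1 * p.2) * fderiv ℝ (PhiH m b μ us) p (1, 0) +
          p.2 * (μ * PiH m b p.1 - a) * fderiv ℝ (PhiH m b μ us) p (0, 1) =
          μ / m * (PiH m b p.1 - PiH m b us) *
            ((1 - p.1) * (b + p.1) - m * ((1 - us) * (b + us) / m))) ∧
      (m * ((1 - us) * (b + us) / m) ≤ b →
        ∀ p ∈ Oset,
          (p.1 * (1 - p.1) - PiH m b p.1 * p.2) * fderiv ℝ (PhiH m b μ us) p (1, 0) +
            p.2 * (μ * PiH m b p.1 - a) * fderiv ℝ (PhiH m b μ us) p (0, 1) ≤ 0)) := by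
  have hb1 : (0:ℝ) < b + 1 := by linarith
  have hμm : a * (b + 1) < μ * m := by
    have := (lt_div_iff₀ hb1).mp hab
    linarith
  have hμma : 0 < μ * m - a := by nlinarith
  constructor
  · -- existence and uniqueness of u*
    refine ⟨a * b / (μ * m - a), ⟨⟨by positivity, ?_⟩, ?_⟩, ?_⟩
    · rw [div_lt_one hμma]; nlinarith
    · unfold PiH
      have hden : b + a * b / (μ * m - a) ≠ 0 := by
        have : 0 < a * b / (μ * m - a) := by positivity
        positivity
      field_simp
      ring
    · rintro y ⟨⟨hy0, hy1⟩, hy⟩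
      unfold PiH at hy
      have hby : b + y ≠ 0 := by positivity
      field_simp at hy ⊢
      nlinarith [hy]
  · intro us hus hEq
    obtain ⟨hus0, hus1⟩ := hus
    have hbus : (0:ℝ) < b + us := by linarith
    have hvs : (0:ℝ) < (1 - us) * (b + us) / m := by
      have h1 : (0:ℝ) < 1 - us := by linarith
      positivity
    -- continuity of the integrands
    have hPic : ContinuousOn (PiH m b) (Set.Ioi 0) := by
      apply ContinuousOn.div (continuousOn_const.mul continuousOn_id)
        (continuousOn_const.add continuousOn_id)
      intro x hx
      have : (0:ℝ) < x := hx
      show b + x ≠ 0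
      positivity
    have hPine : ∀ x ∈ Set.Ioi (0:ℝ), PiH m b x ≠ 0 := by
      intro x hx
      have hx' : (0:ℝ) < x := hx
      have : 0 < PiH m b x := by unfold PiH; positivity
      exact this.ne'
    have hfc : ContinuousOn (fun ξ => (PiH m b ξ - PiH m b us) / PiH m b ξ) (Set.Ioi 0) :=
      (hPic.sub continuousOn_const).div hPic hPine
    have hgc : ContinuousOn
        (fun η => (η - (1 - us) * (b + us) / m) / η) (Set.Ioi 0) :=
      (continuousOn_id.sub continuousOn_const).div continuousOn_id
        (fun x hx => ne_of_gt hx)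
    -- fderiv computation
    have hfd : ∀ p ∈ Oset,
        fderiv ℝ (PhiH m b μ us) p (1, 0) =
          μ * ((PiH m b p.1 - PiH m b us) / PiH m b p.1) ∧
        fderiv ℝ (PhiH m b μ us) p (0, 1) =
          (p.2 - (1 - us) * (b + us) / m) / p.2 := by
      rintro p ⟨hp1, hp2, hp3⟩
      have hF := hasDerivAt_integral_of_contOn hfc hus0 hp1
      have hG := hasDerivAt_integral_of_contOn hgc hvs hp3
      have h1 : HasFDerivAt (fun q : ℝ × ℝ => ∫ ξ in us..q.1,
            (PiH m b ξ - PiH m b us) / PiH m b ξ)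
          (((PiH m b p.1 - PiH m b us) / PiH m b p.1) •
            ContinuousLinearMap.fst ℝ ℝ ℝ) p :=
        hF.comp_hasFDerivAt p hasFDerivAt_fst
      have h2 : HasFDerivAt (fun q : ℝ × ℝ => ∫ η in ((1 - us) * (b + us) / m)..q.2,
            (η - (1 - us) * (b + us) / m) / η)
          (((p.2 - (1 - us) * (b + us) / m) / p.2) •
            ContinuousLinearMap.snd ℝ ℝ ℝ) p :=
        hG.comp_hasFDerivAt p hasFDerivAt_snd
      have hsum := (h1.const_mul μ).add h2
      have hPhi : HasFDerivAt (PhiH m b μ us)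
          (μ • (((PiH m b p.1 - PiH m b us) / PiH m b p.1) •
              ContinuousLinearMap.fst ℝ ℝ ℝ) +
            ((p.2 - (1 - us) * (b + us) / m) / p.2) •
              ContinuousLinearMap.snd ℝ ℝ ℝ) p := hsum
      rw [hPhi.fderiv]
      constructor <;> simp [smul_smul]
    have hid : ∀ p ∈ Oset,
        (p.1 * (1 - p.1) - PiH m b p.1 * p.2) * fderiv ℝ (PhiH m b μ us) p (1, 0) +
          p.2 * (μ * PiH m b p.1 - a) * fderiv ℝ (PhiH m b μ us) p (0, 1) =
          μ / m * (PiH m b p.1 - PiH m b us) *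
            ((1 - p.1) * (b + p.1) - m * ((1 - us) * (b + us) / m)) := by
      intro p hp
      obtain ⟨e1, e2⟩ := hfd p hp
      obtain ⟨hp1, hp2, hp3⟩ := hp
      rw [e1, e2, ← hEq]
      unfold PiH
      have hbp : (0:ℝ) < b + p.1 := by linarith
      have h1 : b + p.1 ≠ 0 := hbp.ne'
      have h2 : b + us ≠ 0 := hbus.ne'
      have h3 : p.1 ≠ 0 := hp1.ne'
      have h4 : p.2 ≠ 0 := hp3.ne'
      field_simp
      ring
    refine ⟨hid, ?_⟩
    intro hb' p hp
    rw [hid p hp]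
    obtain ⟨hp1, hp2, hp3⟩ := hp
    have hbp : (0:ℝ) < b + p.1 := by linarith
    have hbineq : (1 - us) * (b + us) ≤ b := by
      rwa [mul_div_cancel₀ _ hm.ne'] at hb'
    have hsign : 1 - b - p.1 - us ≤ 0 := by nlinarith
    have hkey : μ / m * (PiH m b p.1 - PiH m b us) *
        ((1 - p.1) * (b + p.1) - m * ((1 - us) * (b + us) / m)) =
        (μ * b / ((b + p.1) * (b + us))) *
          ((p.1 - us) ^ 2 * (1 - b - p.1 - us)) := by
      unfold PiH
      have h1 : b + p.1 ≠ 0 := hbp.ne'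
      have h2 : b + us ≠ 0 := hbus.ne'
      field_simp
      ring
    rw [hkey]
    apply mul_nonpos_of_nonneg_of_nonpos
    · positivity
    · exact mul_nonpos_of_nonneg_of_nonpos (sq_nonneg _) hsign
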